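/- arXiv:2602.22704 — 2 statements merged into one kernel-verified Lean document; each statement's English description precedes it below -/
import Mathlib

section
/- Let L₁ and L₂ be finite-dimensional Lie algebras over a field F and let φ : L₁ → L₂ be a Lie algebra homomorphism. Then for every x ∈ sol(L₁) and every z ∈ L₁, the Lie subalgebra of L₂ generated by {φ(x), φ(z)} is solvable; in particular if φ is surjective then φ(sol(L₁)) ⊆ sol(L₂). -/
/-- The solvabilizer of the Lie algebra `L`. -/
def solvabilizerAlg (F L : Type*) [Field F] [LieRing L] [LieAlgebra F L] : Set L :=
  {x : L | ∀ z : L, LieAlgebra.IsSolvable (LieSubalgebra.lieSpan F L {x, z})}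

lemma isSolvable_of_le {F L : Type*} [Field F] [LieRing L] [LieAlgebra F L]
    {K K' : LieSubalgebra F L} (h : K ≤ K') [LieAlgebra.IsSolvable K'] :
    LieAlgebra.IsSolvable K :=
  (LieSubalgebra.inclusion_injective h).lieAlgebra_isSolvable

lemma map_solvable {F L₁ L₂ : Type*} [Field F] [LieRing L₁] [LieAlgebra F L₁]
    [LieRing L₂] [LieAlgebra F L₂] (φ : L₁ →ₗ⁅F⁆ L₂) (K : LieSubalgebra F L₁)
    [LieAlgebra.IsSolvable K] : LieAlgebra.IsSolvable (K.map φ) := by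
  have h : K.map φ = (φ.comp K.incl).range := by
    ext y
    simp [LieSubalgebra.mem_map, LieHom.mem_range]
  rw [h]
  exact (φ.comp K.incl).isSolvable_range

theorem map_solvabilizer_subset (F L₁ L₂ : Type*) [Field F]
    [LieRing L₁] [LieAlgebra F L₁] [LieRing L₂] [LieAlgebra F L₂]
    [Module.Finite F L₁] [Module.Finite F L₂] (φ : L₁ →ₗ⁅F⁆ L₂) :
    (∀ x ∈ solvabilizerAlg F L₁, ∀ z : L₁,
        LieAlgebra.IsSolvable (LieSubalgebra.lieSpan F L₂ {φ x, φ z})) ∧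
      (Function.Surjective φ → φ '' solvabilizerAlg F L₁ ⊆ solvabilizerAlg F L₂) := by
  have key : ∀ x ∈ solvabilizerAlg F L₁, ∀ z : L₁,
      LieAlgebra.IsSolvable (LieSubalgebra.lieSpan F L₂ {φ x, φ z}) := by
    intro x hx z
    have h1 : LieAlgebra.IsSolvable (LieSubalgebra.lieSpan F L₁ {x, z}) := hx z
    have h2 : LieAlgebra.IsSolvable ((LieSubalgebra.lieSpan F L₁ {x, z}).map φ) :=
      map_solvable φ _
    have hle : LieSubalgebra.lieSpan F L₂ {φ x, φ z} ≤
        (LieSubalgebra.lieSpan F L₁ {x, z}).map φ := by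
      rw [LieSubalgebra.lieSpan_le]
      rintro y (rfl | rfl)
      · exact ((LieSubalgebra.lieSpan F L₁ {x, z}).mem_map _ _).mpr
          ⟨x, LieSubalgebra.subset_lieSpan (by simp), rfl⟩
      · exact ((LieSubalgebra.lieSpan F L₁ {x, z}).mem_map _ _).mpr
          ⟨z, LieSubalgebra.subset_lieSpan (by simp), rfl⟩
    exact isSolvable_of_le hle
  refine ⟨key, fun hsurj => ?_⟩
  rintro _ ⟨x, hx, rfl⟩ w
  obtain ⟨z, rfl⟩ := hsurj w
  exact key x hx z
end

section
/- Let f : L → M and g : N → M be surjective Lie algebra homomorphisms between finite-dimensional Lie algebras over a field F, and let P = {(x, y) ∈ L × N | f(x) = g(y)} be the fiber product, a Lie subalgebra of the product Lie algebra L × N. Then, regarding P as a Lie algebra, an element (x, y) ∈ P belongs to sol(P) if and only if x ∈ sol(L) and y ∈ sol(N). -/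
section ProdLie

variable (F : Type*) (L₁ L₂ : Type*) [Field F] [LieRing L₁] [LieAlgebra F L₁]
  [LieRing L₂] [LieAlgebra F L₂]

/-- The componentwise bracket on the product. -/
instance Prod.instBracketProd : Bracket (L₁ × L₂) (L₁ × L₂) :=
  ⟨fun x y => (⁅x.1, y.1⁆, ⁅x.2, y.2⁆)⟩

@[simp] theorem Prod.bracket_def (x y : L₁ × L₂) :
    ⁅x, y⁆ = (⁅x.1, y.1⁆, ⁅x.2, y.2⁆) := rfl

/-- The direct sum (product) of two Lie rings, with componentwise bracket. -/
instance Prod.instLieRingProd : LieRing (L₁ × L₂) where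
  add_lie x y z := by ext <;> simp [add_lie]
  lie_add x y z := by ext <;> simp [lie_add]
  lie_self x := by ext <;> simp
  leibniz_lie x y z := by
    ext <;> simp only [Prod.bracket_def, Prod.fst_add, Prod.snd_add] <;>
      exact leibniz_lie _ _ _

/-- The direct sum (product) of two Lie algebras. -/
instance Prod.instLieAlgebraProd : LieAlgebra F (L₁ × L₂) where
  lie_smul t x y := by ext <;> simp [lie_smul]

end ProdLie

/-- The fiber product `L ×_M N` of two Lie algebra homomorphisms `f : L → M` and
`g : N → M`, as a Lie subalgebra of the product Lie algebra `L × N`. -/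
def fiberProduct (F : Type*) {L M N : Type*} [Field F]
    [LieRing L] [LieAlgebra F L] [LieRing M] [LieAlgebra F M] [LieRing N] [LieAlgebra F N]
    (f : L →ₗ⁅F⁆ M) (g : N →ₗ⁅F⁆ M) : LieSubalgebra F (L × N) where
  carrier := {p : L × N | f p.1 = g p.2}
  add_mem' := by
    intro a b ha hb
    show f (a.1 + b.1) = g (a.2 + b.2)
    rw [map_add f, map_add g, ha, hb]
  zero_mem' := by simp
  smul_mem' := by
    intro c p hp
    show f (c • p.1) = g (c • p.2)
    rw [map_smul f, map_smul g]
    exact congrArg _ hp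
  lie_mem' := by
    intro p q hp hq
    show f ⁅p.1, q.1⁆ = g ⁅p.2, q.2⁆
    rw [LieHom.map_lie, LieHom.map_lie, hp, hq]


section SolvAux

variable (F : Type*) (L₁ L₂ : Type*) [Field F] [LieRing L₁] [LieAlgebra F L₁]
  [LieRing L₂] [LieAlgebra F L₂]

/-- First projection as a Lie algebra homomorphism. -/
def lieFst : L₁ × L₂ →ₗ⁅F⁆ L₁ :=
  { LinearMap.fst F L₁ L₂ with map_lie' := fun {_ _} => rfl }

/-- Second projection as a Lie algebra homomorphism. -/
def lieSnd : L₁ × L₂ →ₗ⁅F⁆ L₂ :=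
  { LinearMap.snd F L₁ L₂ with map_lie' := fun {_ _} => rfl }

@[simp] theorem lieFst_apply (x : L₁ × L₂) : lieFst F L₁ L₂ x = x.1 := rfl
@[simp] theorem lieSnd_apply (x : L₁ × L₂) : lieSnd F L₁ L₂ x = x.2 := rfl

theorem prod_isSolvable (F : Type*) (L₁ L₂ : Type*) [Field F] [LieRing L₁] [LieAlgebra F L₁]
    [LieRing L₂] [LieAlgebra F L₂] [LieAlgebra.IsSolvable L₁] [LieAlgebra.IsSolvable L₂] :
    LieAlgebra.IsSolvable (L₁ × L₂) := by
  obtain ⟨k₁, h₁⟩ := LieAlgebra.IsSolvable.solvable F L₁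
  obtain ⟨k₂, h₂⟩ := LieAlgebra.IsSolvable.solvable F L₂
  refine (LieAlgebra.isSolvable_iff F _).mpr ⟨max k₁ k₂, ?_⟩
  have e₁ : LieAlgebra.derivedSeries F L₁ (max k₁ k₂) = ⊥ := by
    rw [eq_bot_iff, ← h₁]
    exact LieAlgebra.derivedSeriesOfIdeal_antitone ⊤ (le_max_left k₁ k₂)
  have e₂ : LieAlgebra.derivedSeries F L₂ (max k₁ k₂) = ⊥ := by
    rw [eq_bot_iff, ← h₂]
    exact LieAlgebra.derivedSeriesOfIdeal_antitone ⊤ (le_max_right k₁ k₂)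
  rw [eq_bot_iff]
  intro x hx
  have m₁ : x ∈ (lieFst F L₁ L₂).ker := by
    have h := LieIdeal.derivedSeries_map_le (f := lieFst F L₁ L₂) (max k₁ k₂)
    rw [e₁, le_bot_iff, LieIdeal.map_eq_bot_iff] at h
    exact h hx
  have m₂ : x ∈ (lieSnd F L₁ L₂).ker := by
    have h := LieIdeal.derivedSeries_map_le (f := lieSnd F L₁ L₂) (max k₁ k₂)
    rw [e₂, le_bot_iff, LieIdeal.map_eq_bot_iff] at h
    exact h hx
  rw [LieHom.mem_ker, lieFst_apply] at m₁
  rw [LieHom.mem_ker, lieSnd_apply] at m₂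
  have : x = 0 := Prod.ext m₁ m₂
  simp [this]

end SolvAux

/-- An element of the fiber product is in its solvabilizer iff its components lie in the
solvabilizers of the factors. -/
theorem solvabilizer_fiberProduct (F L M N : Type*) [Field F]
    [LieRing L] [LieAlgebra F L] [LieRing M] [LieAlgebra F M] [LieRing N] [LieAlgebra F N]
    [Module.Finite F L] [Module.Finite F M] [Module.Finite F N]
    (f : L →ₗ⁅F⁆ M) (g : N →ₗ⁅F⁆ M)
    (hf : Function.Surjective f) (hg : Function.Surjective g)
    (p : fiberProduct F f g) :
    p ∈ solvabilizerAlg F (fiberProduct F f g) ↔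
      (p : L × N).1 ∈ solvabilizerAlg F L ∧ (p : L × N).2 ∈ solvabilizerAlg F N := by
  let P := fiberProduct F f g
  let π₁ : ↥P →ₗ⁅F⁆ L := (lieFst F L N).comp P.incl
  let π₂ : ↥P →ₗ⁅F⁆ N := (lieSnd F L N).comp P.incl
  constructor
  · intro h
    constructor
    · intro z₁
      obtain ⟨z₂, hz₂⟩ := hg (f z₁)
      have hzP : ((z₁, z₂) : L × N) ∈ P := hz₂.symm
      let z : ↥P := ⟨(z₁, z₂), hzP⟩
      haveI hS : LieAlgebra.IsSolvable
          (LieSubalgebra.lieSpan F (↥P) {p, z}) := h z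
      haveI hr := LieHom.isSolvable_range
        (π₁.comp (LieSubalgebra.lieSpan F (↥P) {p, z}).incl)
      have hle : LieSubalgebra.lieSpan F L {(p : L × N).1, z₁} ≤
          (π₁.comp (LieSubalgebra.lieSpan F (↥P) {p, z}).incl).range := by
        rw [LieSubalgebra.lieSpan_le]
        rintro w hw
        rcases hw with rfl | rfl
        · exact ⟨⟨p, LieSubalgebra.subset_lieSpan (Set.mem_insert _ _)⟩, rfl⟩
        · exact ⟨⟨z, LieSubalgebra.subset_lieSpan
            (Set.mem_insert_of_mem _ rfl)⟩, rfl⟩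
      exact (LieSubalgebra.inclusion_injective hle).lieAlgebra_isSolvable
    · intro z₂
      obtain ⟨z₁, hz₁⟩ := hf (g z₂)
      have hzP : ((z₁, z₂) : L × N) ∈ P := hz₁
      let z : ↥P := ⟨(z₁, z₂), hzP⟩
      haveI hS : LieAlgebra.IsSolvable
          (LieSubalgebra.lieSpan F (↥P) {p, z}) := h z
      haveI hr := LieHom.isSolvable_range
        (π₂.comp (LieSubalgebra.lieSpan F (↥P) {p, z}).incl)
      have hle : LieSubalgebra.lieSpan F N {(p : L × N).2, z₂} ≤
          (π₂.comp (LieSubalgebra.lieSpan F (↥P) {p, z}).incl).range := by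
        rw [LieSubalgebra.lieSpan_le]
        rintro w hw
        rcases hw with rfl | rfl
        · exact ⟨⟨p, LieSubalgebra.subset_lieSpan (Set.mem_insert _ _)⟩, rfl⟩
        · exact ⟨⟨z, LieSubalgebra.subset_lieSpan
            (Set.mem_insert_of_mem _ rfl)⟩, rfl⟩
      exact (LieSubalgebra.inclusion_injective hle).lieAlgebra_isSolvable
  · rintro ⟨hx, hy⟩ z
    let K₁ := LieSubalgebra.lieSpan F L {(p : L × N).1, (z : L × N).1}
    let K₂ := LieSubalgebra.lieSpan F N {(p : L × N).2, (z : L × N).2}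
    haveI h₁ : LieAlgebra.IsSolvable K₁ := hx (z : L × N).1
    haveI h₂ : LieAlgebra.IsSolvable K₂ := hy (z : L × N).2
    haveI h₁₂ : LieAlgebra.IsSolvable (↥K₁ × ↥K₂) := prod_isSolvable F ↥K₁ ↥K₂
    let S := LieSubalgebra.lieSpan F (↥P) {p, z}
    have hS1 : S ≤ K₁.comap π₁ := by
      rw [LieSubalgebra.lieSpan_le]
      rintro w hw
      rcases hw with rfl | rfl
      · exact LieSubalgebra.subset_lieSpan (Set.mem_insert _ _)
      · exact LieSubalgebra.subset_lieSpan (Set.mem_insert_of_mem _ rfl)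
    have hS2 : S ≤ K₂.comap π₂ := by
      rw [LieSubalgebra.lieSpan_le]
      rintro w hw
      rcases hw with rfl | rfl
      · exact LieSubalgebra.subset_lieSpan (Set.mem_insert _ _)
      · exact LieSubalgebra.subset_lieSpan (Set.mem_insert_of_mem _ rfl)
    let Φ : ↥S →ₗ⁅F⁆ (↥K₁ × ↥K₂) :=
      { toFun := fun s => (⟨π₁ s.1, hS1 s.2⟩, ⟨π₂ s.1, hS2 s.2⟩)
        map_add' := fun s t => by
          ext <;> simp
        map_smul' := fun c s => by
          refine Prod.ext (Subtype.ext ?_) (Subtype.ext ?_)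
          · exact π₁.map_smul c ↑s
          · exact π₂.map_smul c ↑s
        map_lie' := fun {s t} => by
          ext <;> rfl }
    have hinj : Function.Injective Φ := by
      intro s t hst
      have h1 : π₁ s.1 = π₁ t.1 := congrArg Subtype.val (congrArg Prod.fst hst)
      have h2 : π₂ s.1 = π₂ t.1 := congrArg Subtype.val (congrArg Prod.snd hst)
      ext
      · exact h1
      · exact h2
    exact hinj.lieAlgebra_isSolvable
end
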